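/- For α ∈ (0,1] and a, b > 0, the function h(r) = (b/a)(1 - I₀^α(√a r)/I₀^α(√a)) satisfies h(1) = 0, h(0) = (b/a)(1 - 1/I₀^α(√a)) > 0, h'(0) = 0, and h is strictly decreasing on [0,1]. -/

import Mathlib

open Real Finset

noncomputable def fracBesselCoeff (α : ℝ) (n : ℕ) : ℝ :=
  (∏ i ∈ Finset.range n, Real.Gamma (2 * (i + 1) - α + 1) / Real.Gamma (2 * (i + 1))) /
    ((Nat.factorial n : ℝ) ^ 2 * 4 ^ n)

noncomputable def fracBesselI (α : ℝ) (x : ℝ) : ℝ :=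
  ∑' n : ℕ, fracBesselCoeff α n * x ^ (2 * n)

lemma fracBesselCoeff_pos {α : ℝ} (hα : α ≤ 1) (n : ℕ) : 0 < fracBesselCoeff α n := by
  unfold fracBesselCoeff
  apply div_pos
  · apply Finset.prod_pos
    intro i _
    apply div_pos
    · apply Real.Gamma_pos_of_pos
      have hi : (0:ℝ) ≤ (i:ℝ) := Nat.cast_nonneg i
      linarith
    · apply Real.Gamma_pos_of_pos
      have hi : (0:ℝ) ≤ (i:ℝ) := Nat.cast_nonneg i
      linarith
  · positivity

lemma fracBesselCoeff_zero (α : ℝ) : fracBesselCoeff α 0 = 1 := by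
  simp [fracBesselCoeff]

lemma fracBesselCoeff_succ (α : ℝ) (n : ℕ) :
    fracBesselCoeff α (n + 1) =
      fracBesselCoeff α n * (Real.Gamma (2 * (n + 1) - α + 1) / Real.Gamma (2 * (n + 1)))
        / (4 * (n + 1) ^ 2) := by
  unfold fracBesselCoeff
  rw [Finset.prod_range_succ]
  have : ((Nat.factorial (n+1) : ℝ)) = (n+1) * Nat.factorial n := by
    push_cast [Nat.factorial_succ]; ring
  rw [this]
  have h1 : (Nat.factorial n : ℝ) ≠ 0 := Nat.cast_ne_zero.2 (Nat.factorial_ne_zero n)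
  have h2 : ((n:ℝ) + 1) ≠ 0 := by positivity
  have h3 : (4:ℝ) ^ n ≠ 0 := by positivity
  field_simp
  ring

lemma fracBesselCoeff_ratio_le {α : ℝ} (hα : α ∈ Set.Ioc (0:ℝ) 1) (n : ℕ) :
    fracBesselCoeff α (n + 1) ≤ fracBesselCoeff α n / (2 * (n + 1)) := by
  rw [fracBesselCoeff_succ]
  have hc := fracBesselCoeff_pos hα.2 n
  have hG2 : (0:ℝ) < Real.Gamma (2 * (n + 1)) := by
    apply Real.Gamma_pos_of_pos; positivity
  have hle : Real.Gamma (2 * ((n:ℝ) + 1) - α + 1) ≤ (2 * (n:ℝ) + 2) * Real.Gamma (2 * (n + 1)) := by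
    have h1 : Real.Gamma (2 * ((n:ℝ) + 1) - α + 1) ≤ Real.Gamma (2 * ((n:ℝ) + 1) + 1) := by
      rcases eq_or_lt_of_le (show 2 * ((n:ℝ) + 1) - α + 1 ≤ 2 * ((n:ℝ) + 1) + 1 by
        have := hα.1; linarith) with h | h
      · rw [h]
      · exact le_of_lt (Real.Gamma_strictMonoOn_Ici
          (by simp [Set.mem_Ici]; have := hα.2; have : (0:ℝ) ≤ (n:ℝ) := Nat.cast_nonneg n; linarith)
          (by simp [Set.mem_Ici]; have : (0:ℝ) ≤ (n:ℝ) := Nat.cast_nonneg n; linarith) h)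
    have h2 : Real.Gamma (2 * ((n:ℝ) + 1) + 1) = (2 * (n:ℝ) + 2) * Real.Gamma (2 * (n + 1)) := by
      rw [Real.Gamma_add_one (by positivity)]; ring
    linarith
  have key : fracBesselCoeff α n * (Real.Gamma (2 * ((n:ℝ) + 1) - α + 1) / Real.Gamma (2 * ((n:ℝ) + 1)))
      ≤ fracBesselCoeff α n * (2 * (n:ℝ) + 2) := by
    apply mul_le_mul_of_nonneg_left _ hc.le
    rw [div_le_iff₀ hG2]
    linarith
  calc fracBesselCoeff α n * (Real.Gamma (2 * ((n:ℝ) + 1) - α + 1) / Real.Gamma (2 * ((n:ℝ) + 1)))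
        / (4 * ((n:ℝ) + 1) ^ 2)
      ≤ fracBesselCoeff α n * (2 * (n:ℝ) + 2) / (4 * ((n:ℝ) + 1) ^ 2) := by
        apply div_le_div_of_nonneg_right key (by positivity) |>.trans_eq rfl
    _ = fracBesselCoeff α n / (2 * ((n:ℝ) + 1)) := by
        field_simp; ring

lemma fracBessel_summable {α : ℝ} (hα : α ∈ Set.Ioc (0:ℝ) 1) (x : ℝ) :
    Summable (fun n => fracBesselCoeff α n * x ^ (2 * n)) := by
  apply summable_of_ratio_norm_eventually_le (r := 1/2) (by norm_num)
  filter_upwards [Filter.eventually_ge_atTop (⌈x^2⌉₊)] with n hn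
  have hc := fracBesselCoeff_pos hα.2 n
  have hc' := fracBesselCoeff_pos hα.2 (n+1)
  have hx : (0:ℝ) ≤ x ^ (2 * n) := (even_two_mul n).pow_nonneg x
  rw [Real.norm_eq_abs, Real.norm_eq_abs, abs_of_nonneg (mul_nonneg hc'.le ((even_two_mul (n+1)).pow_nonneg x)),
    abs_of_nonneg (mul_nonneg hc.le hx)]
  have hrat := fracBesselCoeff_ratio_le hα n
  have hxn : x ^ 2 ≤ (n:ℝ) + 1 := by
    calc x ^ 2 ≤ (⌈x^2⌉₊ : ℝ) := Nat.le_ceil _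
    _ ≤ (n:ℝ) := by exact_mod_cast hn
    _ ≤ (n:ℝ) + 1 := by linarith
  have hpow : x ^ (2 * (n + 1)) = x ^ 2 * x ^ (2 * n) := by ring
  rw [hpow]
  calc fracBesselCoeff α (n+1) * (x ^ 2 * x ^ (2*n))
      ≤ (fracBesselCoeff α n / (2 * (n + 1))) * (x ^ 2 * x ^ (2*n)) := by
        apply mul_le_mul_of_nonneg_right hrat (by positivity)
    _ ≤ 1/2 * (fracBesselCoeff α n * x ^ (2*n)) := by
        rw [div_mul_eq_mul_div, div_le_iff₀ (by positivity)]
        have : fracBesselCoeff α n * x ^ 2 * x ^ (2*n) ≤ fracBesselCoeff α n * ((n:ℝ)+1) * x ^ (2*n) := by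
          apply mul_le_mul_of_nonneg_right _ hx
          exact mul_le_mul_of_nonneg_left hxn hc.le
        nlinarith

lemma fracBesselI_zero (α : ℝ) : fracBesselI α 0 = 1 := by
  unfold fracBesselI
  rw [tsum_eq_single 0]
  · simp [fracBesselCoeff_zero]
  · intro n hn
    have : 2 * n ≠ 0 := by omega
    simp [zero_pow this]

lemma fracBesselI_strictMono {α : ℝ} (hα : α ∈ Set.Ioc (0:ℝ) 1) :
    ∀ x y : ℝ, 0 ≤ x → x < y → fracBesselI α x < fracBesselI α y := by
  intro x y hx hxy
  unfold fracBesselI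
  apply Summable.tsum_lt_tsum (i := 1)
  · intro n
    apply mul_le_mul_of_nonneg_left _ (fracBesselCoeff_pos hα.2 n).le
    exact pow_le_pow_left₀ hx hxy.le _
  · apply mul_lt_mul_of_pos_left _ (fracBesselCoeff_pos hα.2 1)
    have : x ^ 2 < y ^ 2 := by nlinarith
    simpa using this
  · exact fracBessel_summable hα x
  · exact fracBessel_summable hα y

lemma fracBesselI_even (α x : ℝ) : fracBesselI α (-x) = fracBesselI α x := by
  unfold fracBesselI
  congr 1
  funext n
  rw [(even_two_mul n).neg_pow]

theorem corneal_height_properties (α a b : ℝ) (hα : α ∈ Set.Ioc (0:ℝ) 1)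
    (ha : 0 < a) (hb : 0 < b) :
    let h : ℝ → ℝ := fun r =>
      (b / a) * (1 - fracBesselI α (Real.sqrt a * r) / fracBesselI α (Real.sqrt a))
    h 1 = 0 ∧
      (h 0 = (b / a) * (1 - 1 / fracBesselI α (Real.sqrt a)) ∧ 0 < h 0) ∧
      deriv h 0 = 0 ∧
      StrictAntiOn h (Set.Icc 0 1) := by
  intro h
  have hsa : 0 < Real.sqrt a := Real.sqrt_pos.2 ha
  have hC1 : 1 < fracBesselI α (Real.sqrt a) := by
    have := fracBesselI_strictMono hα 0 (Real.sqrt a) le_rfl hsa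
    rwa [fracBesselI_zero] at this
  have hC0 : 0 < fracBesselI α (Real.sqrt a) := by linarith
  refine ⟨?_, ⟨?_, ?_⟩, ?_, ?_⟩
  · show (b / a) * (1 - fracBesselI α (Real.sqrt a * 1) / fracBesselI α (Real.sqrt a)) = 0
    rw [mul_one, div_self hC0.ne']
    ring
  · show (b / a) * (1 - fracBesselI α (Real.sqrt a * 0) / fracBesselI α (Real.sqrt a)) = _
    rw [mul_zero, fracBesselI_zero]
  · show 0 < (b / a) * (1 - fracBesselI α (Real.sqrt a * 0) / fracBesselI α (Real.sqrt a))
    rw [mul_zero, fracBesselI_zero]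
    have : 1 / fracBesselI α (Real.sqrt a) < 1 := by
      rw [div_lt_one hC0]; exact hC1
    have hba : 0 < b / a := div_pos hb ha
    nlinarith
  · have heven : (fun x => h (-x)) = h := by
      funext x
      show (b / a) * (1 - fracBesselI α (Real.sqrt a * (-x)) / _) = _
      rw [show Real.sqrt a * (-x) = -(Real.sqrt a * x) by ring, fracBesselI_even]
    have := deriv_comp_neg h (0:ℝ)
    rw [heven, neg_zero] at this
    linarith
  · intro r1 hr1 r2 hr2 hlt
    have h1 : fracBesselI α (Real.sqrt a * r1) < fracBesselI α (Real.sqrt a * r2) := by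
      apply fracBesselI_strictMono hα
      · exact mul_nonneg hsa.le hr1.1
      · exact mul_lt_mul_of_pos_left hlt hsa
    show (b / a) * (1 - fracBesselI α (Real.sqrt a * r2) / fracBesselI α (Real.sqrt a)) <
      (b / a) * (1 - fracBesselI α (Real.sqrt a * r1) / fracBesselI α (Real.sqrt a))
    have hba : 0 < b / a := div_pos hb ha
    apply mul_lt_mul_of_pos_left _ hba
    exact sub_lt_sub_left ((div_lt_div_iff_of_pos_right hC0).2 h1) 1
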